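/- An arbitrary product of regular simplicial sets is regular. -/

import Mathlib

open CategoryTheory GrothendieckTopology Simplicial Opposite Limits

namespace SSet

/-- Naturality of the Yoneda bijection for simplicial sets. -/
lemma yonedaEquiv_symm_naturality' {m n : SimplexCategory} (f : m ⟶ n) (X : SSet)
    (y : X.obj (op n)) :
    SSet.stdSimplex.map f ≫ (yonedaEquiv (X := X) (n := n)).symm y = (yonedaEquiv (X := X) (n := m)).symm (X.map f.op y) := by
  ext k x
  show X.map (x.down ≫ f).op y = X.map x.down.op (X.map f.op y)
  rw [op_comp, FunctorToTypes.map_comp_apply]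

universe v

variable (X : SSet.{v})

/-- A simplex is degenerate if it is the image of a simplex of strictly lower degree
under a simplicial operator. -/
def Degenerate {n : ℕ} (y : X _⦋n⦌) : Prop :=
  ∃ (m : ℕ) (σ : (⦋n⦌ : SimplexCategory) ⟶ ⦋m⦌) (z : X _⦋m⦌), m < n ∧ y = X.map σ.op z

/-- A simplex is non-degenerate if it is not degenerate. -/
def Nondegenerate {n : ℕ} (y : X _⦋n⦌) : Prop := ¬ X.Degenerate y

/-- The representing map `Δ[n] ⟶ X` of the `(n+1)`-st face `y ∘ δₙ₊₁` of an
`(n+1)`-simplex `y` of `X`. -/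
noncomputable def lastFaceMap {n : ℕ} (y : X _⦋n+1⦌) : Δ[n] ⟶ X :=
  (yonedaEquiv (X := X) (n := ⦋n⦌)).symm (X.map (SimplexCategory.δ (Fin.last (n+1))).op y)

/-- The canonical map `Δ[n+1] ⊔_{Δ[n]} Y' ⟶ X`, where `Y'` is the simplicial subset of `X`
generated by the last face of `y` (i.e. the image of the representing map of that face). -/
noncomputable def regularityMap {n : ℕ} (y : X _⦋n+1⦌) :
    pushout (SSet.stdSimplex.map (SimplexCategory.δ (Fin.last (n+1))))
      (Subfunctor.toRange (X.lastFaceMap y)) ⟶ X :=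
  pushout.desc ((yonedaEquiv (X := X) (n := ⦋n+1⦌)).symm y) (Subfunctor.range (X.lastFaceMap y)).ι
    (by rw [yonedaEquiv_symm_naturality']; exact (Subfunctor.toRange_ι _).symm)

/-- A simplicial set is regular if, for each of its non-degenerate simplices `y`,
the canonical map from the pushout `Δ[n+1] ⊔_{Δ[n]} Y'` to `X` is degreewise injective. -/
def IsRegular : Prop :=
  ∀ (n : ℕ) (y : X _⦋n+1⦌), X.Nondegenerate y →
    ∀ (k : SimplexCategoryᵒᵖ), Function.Injective ((X.regularityMap y).app k)

end SSet

universe u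

section RegularityAux

open SSet SimplexCategory

universe v


namespace RegAux

def HitsTop {s : SimplexCategory} {n : ℕ} (α : s ⟶ ⦋n+1⦌) : Prop :=
  ∃ i, α.toOrderHom i = Fin.last (n+1)

instance {s : SimplexCategory} {n : ℕ} (α : s ⟶ ⦋n+1⦌) : Decidable (HitsTop α) :=
  decidable_of_iff (∃ i, α.toOrderHom i = Fin.last (n+1)) Iff.rfl

lemma hitsTop_of_comp {s s' : SimplexCategory} {n : ℕ} {α : s ⟶ ⦋n+1⦌} {g : s' ⟶ s}
    (h : HitsTop (g ≫ α)) : HitsTop α := by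
  obtain ⟨i, hi⟩ := h
  rw [comp_toOrderHom] at hi
  exact ⟨g.toOrderHom i, hi⟩

/-- carrier type -/
abbrev QT (n : ℕ) (s : SimplexCategoryᵒᵖ) : Type v :=
  Option (ULift.{v} {α : s.unop ⟶ ⦋n+1⦌ // HitsTop α})

/-- element constructor -/
def QT.mk {n : ℕ} {s : SimplexCategoryᵒᵖ} (α : s.unop ⟶ ⦋n+1⦌) (h : HitsTop α) : QT.{v} n s :=
  some (ULift.up ⟨α, h⟩)

def QTmap {n : ℕ} {s s' : SimplexCategoryᵒᵖ} (g : s ⟶ s') : QT.{v} n s → QT.{v} n s' :=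
  fun x => x.bind (fun α =>
    if h : HitsTop (g.unop ≫ α.down.1) then QT.mk _ h else none)

lemma QTmap_mk {n : ℕ} {s s' : SimplexCategoryᵒᵖ} (g : s ⟶ s') (α : s.unop ⟶ ⦋n+1⦌)
    (h : HitsTop α) :
    QTmap.{v} g (QT.mk α h) =
      if h' : HitsTop (g.unop ≫ α) then QT.mk _ h' else none := rfl

/-- The quotient `Δ[n+1]/Δ[n]` as a concrete presheaf. -/
def Q (n : ℕ) : SSet.{v} where
  obj s := QT.{v} n s
  map {s s'} g := TypeCat.ofHom (QTmap.{v} g)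
  map_id s := by
    ext x : 3
    match x with
    | none => rfl
    | some α =>
      obtain ⟨⟨a, ha⟩⟩ := α
      show QTmap (𝟙 s) (QT.mk a ha) = QT.mk a ha
      rw [QTmap_mk, unop_id, Category.id_comp, dif_pos ha]
  map_comp {s s' s''} g g' := by
    ext x : 3
    match x with
    | none => rfl
    | some α =>
      obtain ⟨⟨a, ha⟩⟩ := α
      show QTmap (g ≫ g') (QT.mk a ha) = QTmap g' (QTmap g (QT.mk a ha))
      rw [QTmap_mk, QTmap_mk, unop_comp, Category.assoc]
      by_cases h1 : HitsTop (g.unop ≫ a)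
      · rw [dif_pos h1, QTmap_mk]
      · rw [dif_neg h1, dif_neg (fun hh => h1 (hitsTop_of_comp hh))]
        rfl

/-- The canonical map `Δ[n+1] ⟶ Q n`. -/
def uQ (n : ℕ) : Δ[n+1] ⟶ Q.{v} n where
  app s := TypeCat.ofHom fun x => if h : HitsTop x.down then QT.mk _ h else none
  naturality s s' g := by
    ext x
    show (if h : HitsTop (g.unop ≫ x.down) then QT.mk _ h else none)
      = QTmap g (if h : HitsTop x.down then QT.mk _ h else none)
    by_cases h1 : HitsTop x.down
    · erw [dif_pos h1, QTmap_mk]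
    · erw [dif_neg h1, dif_neg (fun hh => h1 (hitsTop_of_comp hh))]
      rfl

lemma uQ_app {n : ℕ} (s : SimplexCategoryᵒᵖ) (x : Δ[n+1].obj s) :
    (uQ.{v} n).app s x = if h : HitsTop x.down then QT.mk _ h else none := rfl

/-- Constant map to `Q n`. -/
def constQ (A : SSet.{v}) (n : ℕ) : A ⟶ Q.{v} n where
  app _ := TypeCat.ofHom fun _ => none
  naturality _ _ _ := rfl

lemma comm_uQ (X : SSet.{v}) {n : ℕ} (φ : Δ[n] ⟶ X) :
    SSet.stdSimplex.map (SimplexCategory.δ (Fin.last (n+1))) ≫ uQ.{v} n =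
      Subfunctor.toRange φ ≫ constQ _ n := by
  ext s x
  show (if h : HitsTop (x.down ≫ SimplexCategory.δ (Fin.last (n+1))) then QT.mk _ h else none)
    = none
  erw [dif_neg]
  rintro ⟨i, hi⟩
  rw [comp_toOrderHom] at hi
  exact Fin.succAbove_ne (Fin.last (n+1)) _ hi

end RegAux

namespace RegAux

lemma epi_toOrderHom_last {p q : ℕ} (θ : (⦋p⦌ : SimplexCategory) ⟶ ⦋q⦌) (hθ : Epi θ) :
    θ.toOrderHom (Fin.last p) = Fin.last q := by
  obtain ⟨x, hx⟩ := epi_iff_surjective.mp hθ (Fin.last q)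
  exact le_antisymm (Fin.le_last _) (hx ▸ θ.toOrderHom.monotone (Fin.le_last x))

lemma hitsTop_comp_epi {s : SimplexCategory} {n m : ℕ} {α : s ⟶ ⦋n+1⦌}
    (θ : (⦋n+1⦌ : SimplexCategory) ⟶ ⦋m+1⦌) (hθ : Epi θ) (h : HitsTop α) :
    HitsTop (α ≫ θ) := by
  obtain ⟨i, hi⟩ := h
  refine ⟨i, ?_⟩
  rw [comp_toOrderHom]
  show θ.toOrderHom (α.toOrderHom i) = _
  rw [hi, epi_toOrderHom_last θ hθ]

/-- The combinatorial characterization of regularity. -/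
def Cond (X : SSet.{v}) : Prop :=
  ∀ (n : ℕ) (y : X _⦋n+1⦌), X.Nondegenerate y →
    ∀ (s : SimplexCategory) (α β : s ⟶ ⦋n+1⦌),
      X.map α.op y = X.map β.op y → α ≠ β → ¬ HitsTop α ∧ ¬ HitsTop β

lemma regularityMap_inl (X : SSet.{v}) {n : ℕ} (y : X _⦋n+1⦌) (k : SimplexCategoryᵒᵖ)
    (x : Δ[n+1].obj k) :
    (X.regularityMap y).app k
      ((pushout.inl (SSet.stdSimplex.map (SimplexCategory.δ (Fin.last (n+1))))
        (Subfunctor.toRange (X.lastFaceMap y))).app k x) = X.map x.down.op y := by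
  have h1 : pushout.inl (SSet.stdSimplex.map (SimplexCategory.δ (Fin.last (n+1))))
      (Subfunctor.toRange (X.lastFaceMap y)) ≫ X.regularityMap y =
      (yonedaEquiv (X := X) (n := ⦋n+1⦌)).symm y := pushout.inl_desc _ _ _
  have h2 := types_congr_hom (NatTrans.congr_app h1 k) x
  rw [FunctorToTypes.comp] at h2
  exact h2

lemma cond_of_isRegular (X : SSet.{v}) (hX : X.IsRegular) : Cond X := by
  intro n y hy s α β heq hne
  have hinj := hX n y hy (op s)
  have he : (pushout.inl (SSet.stdSimplex.map (SimplexCategory.δ (Fin.last (n+1))))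
        (Subfunctor.toRange (X.lastFaceMap y))).app (op s) (ULift.up α) =
      (pushout.inl (SSet.stdSimplex.map (SimplexCategory.δ (Fin.last (n+1))))
        (Subfunctor.toRange (X.lastFaceMap y))).app (op s) (ULift.up β) := by
    apply hinj
    erw [regularityMap_inl, regularityMap_inl]
    exact heq
  have hφ : pushout.inl (SSet.stdSimplex.map (SimplexCategory.δ (Fin.last (n+1))))
        (Subfunctor.toRange (X.lastFaceMap y)) ≫
        pushout.desc (uQ.{v} n) (constQ _ n) (comm_uQ X (X.lastFaceMap y)) = uQ.{v} n :=
    pushout.inl_desc _ _ _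
  have h4 : (uQ.{v} n).app (op s) (ULift.up α) = (uQ.{v} n).app (op s) (ULift.up β) := by
    have e1 := types_congr_hom (NatTrans.congr_app hφ (op s)) (ULift.up α)
    have e2 := types_congr_hom (NatTrans.congr_app hφ (op s)) (ULift.up β)
    erw [FunctorToTypes.comp] at e1 e2
    rw [← e1, ← e2, he]
  have key : ∀ (γ γ' : s ⟶ ⦋n+1⦌), γ ≠ γ' →
      (uQ.{v} n).app (op s) (ULift.up γ) = (uQ.{v} n).app (op s) (ULift.up γ') →
      ¬ HitsTop γ := by
    intro γ γ' hne' he' hγ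
    erw [uQ_app, uQ_app, dif_pos hγ] at he'
    by_cases hγ' : HitsTop γ'
    · rw [dif_pos hγ'] at he'
      have := congrArg ULift.down (Option.some.inj he')
      exact hne' (congrArg Subtype.val this)
    · rw [dif_neg hγ'] at he'
      exact Option.some_ne_none _ he'
  exact ⟨key α β hne h4, key β α (Ne.symm hne) h4.symm⟩


lemma isRegular_of_cond (X : SSet.{v}) (hX : Cond X) : X.IsRegular := by
  intro n y hy k
  -- abbreviations
  have hval := regularityMap_inl X y k
  -- joint surjectivity: every element of the pushout comes from `inl`
  have hsurj : ∀ p : (pushout (SSet.stdSimplex.map (SimplexCategory.δ (Fin.last (n+1))))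
      (Subfunctor.toRange (X.lastFaceMap y))).obj k,
      ∃ x : Δ[n+1].obj k,
        (pushout.inl (SSet.stdSimplex.map (SimplexCategory.δ (Fin.last (n+1))))
          (Subfunctor.toRange (X.lastFaceMap y))).app k x = p := by
    set f := SSet.stdSimplex.map (SimplexCategory.δ (Fin.last (n+1))) with hf
    set g := Subfunctor.toRange (X.lastFaceMap y) with hg
    let T := Subfunctor.range (pushout.inl f g)
    let r : (Subfunctor.range (X.lastFaceMap y)).toFunctor ⟶ T.toFunctor :=
      { app := fun k' => TypeCat.ofHom fun t => ⟨(pushout.inr f g).app k' t, by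
          obtain ⟨γ, hγ⟩ := t.2
          refine ⟨f.app k' γ, ?_⟩
          have hc := types_congr_hom (NatTrans.congr_app (pushout.condition (f := f) (g := g)) k') γ
          rw [FunctorToTypes.comp, FunctorToTypes.comp] at hc
          rw [hc]
          exact congrArg ((pushout.inr f g).app k') (Subtype.ext hγ)⟩
        naturality := fun k1 k2 i => by
          ext t
          have := FunctorToTypes.naturality (pushout.inr f g) i t; exact Subtype.ext this }
    have hcomm : f ≫ Subfunctor.toRange (pushout.inl f g) = g ≫ r := by
      ext k' x
      exact Subtype.ext (types_congr_hom (NatTrans.congr_app (pushout.condition (f := f) (g := g)) k') x)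
    have hdesc : pushout.desc (Subfunctor.toRange (pushout.inl f g)) r hcomm ≫ T.ι = 𝟙 _ := by
      apply pushout.hom_ext
      · rw [← Category.assoc, pushout.inl_desc, Subfunctor.toRange_ι, Category.comp_id]
      · rw [← Category.assoc, pushout.inr_desc, Category.comp_id]
        ext k' t
        rfl
    intro p
    have hp := types_congr_hom (NatTrans.congr_app hdesc k) p
    rw [FunctorToTypes.comp] at hp
    obtain ⟨x, hx⟩ := ((pushout.desc (Subfunctor.toRange (pushout.inl f g)) r hcomm).app k p).2
    exact ⟨x, by rw [hx]; exact hp⟩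
  intro p q hpq
  obtain ⟨x, rfl⟩ := hsurj p
  obtain ⟨x', rfl⟩ := hsurj q
  rw [hval, hval] at hpq
  by_cases hxx : x.down = x'.down
  · obtain ⟨xd⟩ := x
    obtain ⟨xd'⟩ := x'
    exact congrArg _ (congrArg ULift.up hxx)
  · obtain ⟨h1, h2⟩ := hX n y hy k.unop x.down x'.down hpq hxx
    obtain ⟨γ, hγ⟩ := SimplexCategory.eq_comp_δ_of_not_surjective' x.down (Fin.last (n+1))
      (fun z hz => h1 ⟨z, hz⟩)
    obtain ⟨γ', hγ'⟩ := SimplexCategory.eq_comp_δ_of_not_surjective' x'.down (Fin.last (n+1))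
      (fun z hz => h2 ⟨z, hz⟩)
    set f := SSet.stdSimplex.map (SimplexCategory.δ (Fin.last (n+1))) with hf
    set g := Subfunctor.toRange (X.lastFaceMap y) with hg
    have e1 : (pushout.inl f g).app k x = (pushout.inr f g).app k (g.app k (ULift.up γ)) := by
      have hc := types_congr_hom (NatTrans.congr_app (pushout.condition (f := f) (g := g)) k)
        (ULift.up γ)
      change (pushout.inl f g).app k (f.app k (ULift.up γ)) = (pushout.inr f g).app k (g.app k (ULift.up γ)) at hc
      rw [← hc]
      exact congrArg ((pushout.inl f g).app k) (ULift.ext _ _ hγ)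
    have e2 : (pushout.inl f g).app k x' = (pushout.inr f g).app k (g.app k (ULift.up γ')) := by
      have hc := types_congr_hom (NatTrans.congr_app (pushout.condition (f := f) (g := g)) k)
        (ULift.up γ')
      change (pushout.inl f g).app k (f.app k (ULift.up γ')) = (pushout.inr f g).app k (g.app k (ULift.up γ')) at hc
      rw [← hc]
      exact congrArg ((pushout.inl f g).app k) (ULift.ext _ _ hγ')
    rw [e1, e2]
    refine congrArg ((pushout.inr f g).app k) (Subtype.ext ?_)
    show X.map γ.op (X.map (SimplexCategory.δ (Fin.last (n+1))).op y)
      = X.map γ'.op (X.map (SimplexCategory.δ (Fin.last (n+1))).op y)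
    rw [← FunctorToTypes.map_comp_apply, ← FunctorToTypes.map_comp_apply, ← op_comp, ← op_comp,
      ← hγ, ← hγ']
    exact hpq


/-- Eilenberg–Zilber: every simplex is an epi-degeneration of a nondegenerate simplex. -/
lemma exists_nondeg (X : SSet.{v}) : ∀ (n : ℕ) (y : X _⦋n⦌),
    ∃ (m : ℕ) (θ : (⦋n⦌ : SimplexCategory) ⟶ ⦋m⦌) (z : X _⦋m⦌),
      Epi θ ∧ X.Nondegenerate z ∧ y = X.map θ.op z := by
  intro n
  induction n using Nat.strong_induction_on with
  | _ n ih =>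
    intro y
    by_cases hy : X.Nondegenerate y
    · exact ⟨n, 𝟙 _, y, inferInstance, hy, by
        rw [op_id, FunctorToTypes.map_id_apply]⟩
    · obtain ⟨m, θ0, z0, hm, hy0⟩ := not_not.mp hy
      obtain ⟨n', rfl⟩ : ∃ n', n = n' + 1 := ⟨n - 1, by omega⟩
      have hθ0 : ¬ Function.Injective θ0.toOrderHom := by
        intro hinj
        have := Fintype.card_le_of_injective _ hinj
        simp only [SimplexCategory.len_mk, Fintype.card_fin] at this
        omega
      obtain ⟨i, θ', hθ'⟩ := SimplexCategory.eq_σ_comp_of_not_injective θ0 hθ0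
      obtain ⟨m₁, θ₁, z₁, he, hz, h1⟩ := ih n' (by omega) (X.map θ'.op z0)
      refine ⟨m₁, SimplexCategory.σ i ≫ θ₁, z₁, ?_, hz, ?_⟩
      · haveI : IsSplitEpi (SimplexCategory.σ i) :=
          IsSplitEpi.mk' ⟨SimplexCategory.δ i.castSucc, SimplexCategory.δ_comp_σ_self⟩
        exact epi_comp _ _
      · rw [hy0, hθ', op_comp, FunctorToTypes.map_comp_apply, h1, op_comp,
          FunctorToTypes.map_comp_apply]

end RegAux

namespace RegAux

/-- The pointwise description of a product of simplicial sets. -/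
noncomputable def piEquiv {J : Type u} (Xs : J → SSet.{u}) (k : SimplexCategoryᵒᵖ) :
    (∏ᶜ Xs).obj k ≃ ∀ j, (Xs j).obj k := by
  refine Equiv.ofBijective (fun x j => (Pi.π Xs j).app k x) ?_
  have heq : (fun (x : (∏ᶜ Xs).obj k) j => (Pi.π Xs j).app k x) =
      (Types.productIso (fun j => (Xs j).obj k)).hom ∘
        (PreservesProduct.iso ((evaluation SimplexCategoryᵒᵖ (Type u)).obj k) Xs).hom := by
    funext x
    funext j
    show _ = (Types.productIso (fun j => (Xs j).obj k)).hom
      ((PreservesProduct.iso ((evaluation SimplexCategoryᵒᵖ (Type u)).obj k) Xs).hom x) j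
    rw [Types.productIso_hom_comp_eval_apply, PreservesProduct.iso_hom]
    have := types_congr_hom (piComparison_comp_π ((evaluation SimplexCategoryᵒᵖ (Type u)).obj k) Xs j) x
    rw [types_comp_apply] at this
    exact this.symm
  rw [heq]
  exact Function.Bijective.comp ((isIso_iff_bijective _).mp inferInstance)
    ((isIso_iff_bijective _).mp inferInstance)

end RegAux

end RegularityAux

/-- An arbitrary product of regular simplicial sets is regular. -/
theorem isRegular_product {J : Type u} (Xs : J → SSet.{u}) (h : ∀ j, (Xs j).IsRegular) :
    SSet.IsRegular (∏ᶜ Xs) := by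
  apply RegAux.isRegular_of_cond
  intro n y hy s α β heq hne
  set yj : ∀ j, (Xs j).obj (op (SimplexCategory.mk (n+1))) :=
    fun j => (Pi.π Xs j).app (op (SimplexCategory.mk (n+1))) y with hyj
  choose m θ z hepi hnd hdec using fun j => RegAux.exists_nondeg (Xs j) (n+1) (yj j)
  by_cases hc : ∀ j, α ≫ θ j = β ≫ θ j
  · exfalso
    apply hy
    have hex : ∃ i, α.toOrderHom i ≠ β.toOrderHom i := by
      by_contra hno
      push_neg at hno
      refine hne ?_
      ext i : 3
      exact hno i
    obtain ⟨i, hi⟩ := hex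
    have habs : ∃ a b : Fin (n+2), a < b ∧
        ∀ j, (θ j).toOrderHom a = (θ j).toOrderHom b := by
      have hσ : ∀ j, (θ j).toOrderHom (α.toOrderHom i) = (θ j).toOrderHom (β.toOrderHom i) := by
        intro j
        have := congrArg (fun φ => SimplexCategory.Hom.toOrderHom φ i) (hc j)
        simpa [SimplexCategory.comp_toOrderHom] using this
      rcases lt_trichotomy (α.toOrderHom i) (β.toOrderHom i) with hlt | heqq | hgt
      · exact ⟨_, _, hlt, hσ⟩
      · exact absurd heqq hi
      · exact ⟨_, _, hgt, fun j => (hσ j).symm⟩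
    obtain ⟨a, b, hab, hsab⟩ := habs
    have haval : (a : ℕ) < n + 1 := by
      have h1 : (a : ℕ) < (b : ℕ) := hab
      have h2 : (b : ℕ) < n + 2 := b.isLt
      omega
    set a' : Fin (n+1) := ⟨a, haval⟩ with ha'
    have hca : a'.castSucc = a := by
      apply Fin.ext
      simp [ha']
    have hkey : ∀ j, (θ j).toOrderHom a'.castSucc = (θ j).toOrderHom a'.succ := by
      intro j
      have hsb : a'.succ ≤ b := by
        rw [Fin.le_def]
        have h1 : (a : ℕ) < (b : ℕ) := hab
        simp [ha']
        omega
      apply le_antisymm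
      · exact (θ j).toOrderHom.monotone ((Fin.castSucc_lt_succ (i := a'))).le
      · calc (θ j).toOrderHom a'.succ ≤ (θ j).toOrderHom b := (θ j).toOrderHom.monotone hsb
          _ = (θ j).toOrderHom a := (hsab j).symm
          _ = (θ j).toOrderHom a'.castSucc := by rw [hca]
    choose θ' hθ' using fun j => SimplexCategory.eq_σ_comp_of_not_injective' (θ j) a' (hkey j)
    obtain ⟨w, hw⟩ := (RegAux.piEquiv Xs (op (SimplexCategory.mk n))).surjective
      (fun j => (Xs j).map (θ' j).op (z j))
    refine ⟨n, SimplexCategory.σ a', w, Nat.lt_succ_self n, ?_⟩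
    apply (RegAux.piEquiv Xs (op (SimplexCategory.mk (n+1)))).injective
    funext j
    show (Pi.π Xs j).app _ y =
      (Pi.π Xs j).app _ ((∏ᶜ Xs).map (SimplexCategory.σ a').op w)
    rw [FunctorToTypes.naturality]
    have hwj : (Pi.π Xs j).app (op (SimplexCategory.mk n)) w = (Xs j).map (θ' j).op (z j) :=
      congr_fun hw j
    rw [hwj, ← FunctorToTypes.map_comp_apply, ← op_comp, ← hθ' j, ← hdec j]
  · push_neg at hc
    obtain ⟨j0, hj0⟩ := hc
    obtain ⟨mj, θj, zj, hepij, hndj, hdecj, hnej⟩ :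
        ∃ (mj : ℕ) (θj : (⦋n+1⦌ : SimplexCategory) ⟶ ⦋mj⦌) (zj : (Xs j0) _⦋mj⦌),
          Epi θj ∧ (Xs j0).Nondegenerate zj ∧ yj j0 = (Xs j0).map θj.op zj ∧
            α ≫ θj ≠ β ≫ θj :=
      ⟨m j0, θ j0, z j0, hepi j0, hnd j0, hdec j0, hj0⟩
    cases mj with
    | zero =>
      refine absurd ?_ hnej
      ext x : 3
      have hv1 := ((α ≫ θj).toOrderHom x).isLt
      have hv2 := ((β ≫ θj).toOrderHom x).isLt
      simp only [SimplexCategory.len_mk] at hv1 hv2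
      apply Fin.ext
      omega
    | succ m' =>
      have hcomp : (Xs j0).map (α ≫ θj).op zj = (Xs j0).map (β ≫ θj).op zj := by
        rw [op_comp, FunctorToTypes.map_comp_apply, op_comp, FunctorToTypes.map_comp_apply,
          ← hdecj]
        calc (Xs j0).map α.op (yj j0)
            = (Pi.π Xs j0).app (op s) ((∏ᶜ Xs).map α.op y) :=
              (FunctorToTypes.naturality (Pi.π Xs j0) α.op y).symm
          _ = (Pi.π Xs j0).app (op s) ((∏ᶜ Xs).map β.op y) := by rw [heq]
          _ = (Xs j0).map β.op (yj j0) := FunctorToTypes.naturality (Pi.π Xs j0) β.op y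
      obtain ⟨h1, h2⟩ := RegAux.cond_of_isRegular (Xs j0) (h j0) m' zj hndj s (α ≫ θj) (β ≫ θj)
        hcomp hnej
      exact ⟨fun hα => h1 (RegAux.hitsTop_comp_epi θj hepij hα),
        fun hβ => h2 (RegAux.hitsTop_comp_epi θj hepij hβ)⟩
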